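/- Let α and β be positive irrational real numbers with 1/α + 1/β = 1. Then every positive integer lies in {⌊nα⌋ : n ∈ ℕ, n ≥ 1} ∪ {⌊nβ⌋ : n ∈ ℕ, n ≥ 1}. -/

import Mathlib

theorem beatty_cover (α β : ℝ) (hα : 0 < α) (hβ : 0 < β)
    (hirrα : Irrational α) (hirrβ : Irrational β)
    (hsum : 1/α + 1/β = 1) :
    ∀ k : ℤ, 0 < k →
      k ∈ {k : ℤ | ∃ n : ℕ, 0 < n ∧ ⌊(n : ℝ) * α⌋ = k} ∪
          {k : ℤ | ∃ n : ℕ, 0 < n ∧ ⌊(n : ℝ) * β⌋ = k} := by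
  intro k hk
  have hα1 : 1 < α := by
    by_contra h
    push_neg at h
    have h1 : 1 ≤ 1/α := by
      rw [le_div_iff₀ hα]; linarith
    have h2 : 0 < 1/β := by positivity
    linarith
  have hconj : α.HolderConjugate β := Real.holderConjugate_iff.mpr ⟨hα1, by rw [← one_div, ← one_div]; exact hsum⟩
  have := Irrational.beattySeq_symmDiff_beattySeq_pos hconj hirrα
  have hmem : k ∈ symmDiff {beattySeq α k | k > 0} {beattySeq β k | k > 0} := by
    rw [this]; exact hk
  rcases Set.mem_symmDiff.mp hmem with ⟨⟨m, hm, hmk⟩, -⟩ | ⟨⟨m, hm, hmk⟩, -⟩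
  · left
    exact ⟨m.toNat, by omega, by
      rw [beattySeq] at hmk
      rwa [show ((m.toNat : ℕ) : ℝ) = (m : ℝ) by exact_mod_cast congrArg Int.cast (Int.toNat_of_nonneg hm.le)]⟩
  · right
    exact ⟨m.toNat, by omega, by
      rw [beattySeq] at hmk
      rwa [show ((m.toNat : ℕ) : ℝ) = (m : ℝ) by exact_mod_cast congrArg Int.cast (Int.toNat_of_nonneg hm.le)]⟩
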